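/- Let u, v, w be three distinct top vertices drawn in this order from top to bottom, B a finite bottom set, and Adj a function assigning to each b ∈ B a subset Adj(b) ⊆ {u,v,w}. Let a ∈ B satisfy u ∈ Adj(a) and w ∈ Adj(a). Then for every linear order ≺ on B and every b ∈ B with b ≠ a and v ∈ Adj(b), the edge (v,b) crosses the edge (u,a) or the edge (w,a). Consequently, for every linear order ≺ on B, the number of crossing edge pairs in which one edge is incident to a is at least the number of b ∈ B with b ≠ a and v ∈ Adj(b). -/

import Mathlib

/-- `Above u v w s t` says that top vertex `s` is drawn above top vertex `t`,
where the top layer consists of `u`, `v`, `w` drawn in this order from top to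
bottom. -/
def Above {T : Type} (u v w : T) (s t : T) : Prop :=
  (s = u ∧ t = v) ∨ (s = u ∧ t = w) ∨ (s = v ∧ t = w)

/-- If `a` is a bottom vertex adjacent to both `u` and `w`, then for every linear
order `≺` on the bottom layer, every edge `(v, b)` with `b ≠ a` crosses the edge
`(u, a)` or the edge `(w, a)`.  Consequently, the number of crossing edge pairs in
which one edge is incident to `a` (counted as triples `(s, t, b)` with `s ∈ Adj a`,
`t ∈ Adj b`, `b ≠ a` and the edges `(s, a)` and `(t, b)` crossing) is at least the
number of `b ≠ a` with `v ∈ Adj b`. -/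
theorem stmt5 {T B : Type} [Fintype B] (u v w : T)
    (huv : u ≠ v) (huw : u ≠ w) (hvw : v ≠ w)
    (Adj : B → Set T) (hsub : ∀ b, Adj b ⊆ {u, v, w})
    (a : B) (hau : u ∈ Adj a) (haw : w ∈ Adj a)
    (lt : B → B → Prop) (hlt : IsStrictTotalOrder B lt) :
    (∀ b : B, b ≠ a → v ∈ Adj b →
      ((Above u v w u v ∧ lt b a) ∨ (Above u v w v u ∧ lt a b)) ∨
      ((Above u v w w v ∧ lt b a) ∨ (Above u v w v w ∧ lt a b))) ∧
    {q : T × T × B | q.1 ∈ Adj a ∧ q.2.1 ∈ Adj q.2.2 ∧ q.2.2 ≠ a ∧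
        ((Above u v w q.1 q.2.1 ∧ lt q.2.2 a) ∨
         (Above u v w q.2.1 q.1 ∧ lt a q.2.2))}.ncard
      ≥ {b : B | b ≠ a ∧ v ∈ Adj b}.ncard := by
  have tri : ∀ b : B, b ≠ a → lt b a ∨ lt a b := by
    intro b hb
    rcases (show lt b a ∨ b = a ∨ lt a b from (em (lt b a)).elim Or.inl fun h1 => (em (lt a b)).elim (fun h2 => Or.inr (Or.inr h2)) fun h2 => Or.inr (Or.inl (hlt.trichotomous b a h1 h2))) with h | h | h
    · exact Or.inl h
    · exact absurd h hb
    · exact Or.inr h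
  constructor
  · intro b hb _
    rcases tri b hb with h | h
    · exact Or.inl (Or.inl ⟨Or.inl ⟨rfl, rfl⟩, h⟩)
    · exact Or.inr (Or.inr ⟨Or.inr (Or.inr ⟨rfl, rfl⟩), h⟩)
  · set S : Set (T × T × B) := {q : T × T × B | q.1 ∈ Adj a ∧ q.2.1 ∈ Adj q.2.2 ∧ q.2.2 ≠ a ∧
        ((Above u v w q.1 q.2.1 ∧ lt q.2.2 a) ∨
         (Above u v w q.2.1 q.1 ∧ lt a q.2.2))} with hS
    classical
    have hfin : S.Finite := by
      apply Set.Finite.subset (Set.Finite.prod (((Set.finite_singleton w).insert v).insert u)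
        (Set.Finite.prod (((Set.finite_singleton w).insert v).insert u) Set.finite_univ))
      rintro ⟨s, t, b⟩ ⟨h1, h2, _⟩
      exact ⟨hsub a h1, hsub b h2, Set.mem_univ _⟩
    set f : B → T × T × B := fun b => ((if lt b a then u else w), v, b) with hf
    have key : ∀ b ∈ {b : B | b ≠ a ∧ v ∈ Adj b}, f b ∈ S := by
      rintro b ⟨hb, hv⟩
      by_cases h : lt b a
      · simp only [hf, if_pos h]
        exact ⟨hau, hv, hb, Or.inl ⟨Or.inl ⟨rfl, rfl⟩, h⟩⟩
      · simp only [hf, if_neg h]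
        rcases tri b hb with h' | h'
        · exact absurd h' h
        · exact ⟨haw, hv, hb, Or.inr ⟨Or.inr (Or.inr ⟨rfl, rfl⟩), h'⟩⟩
    have hinj : Set.InjOn f {b : B | b ≠ a ∧ v ∈ Adj b} := by
      intro b1 _ b2 _ h
      exact congrArg (fun q => q.2.2) h
    exact Set.ncard_le_ncard_of_injOn f key hinj hfin
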